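/- Let C be a small category, G a presheaf on C, and define the category IT_G whose objects are pairs (H, φ) of a covariant functor H : C → Set together with a family of maps φ_c : G(c) → H(c) satisfying H(f) ∘ φ_{c'} ∘ G(f) = φ_c for every morphism f : c' → c, and whose morphisms (H, φ) → (H', φ') are natural transformations n : H → H' with n ∘ φ = φ'. Then for a directed graph G (a presheaf on ↑↑), the category IT_G has an initial object. -/

import Mathlib

open CategoryTheory Limits Opposite

variable {C : Type} [SmallCategory C]

/-- An object of the category `IT_G`: a covariant functor `H : C ⥤ Type` together with a family
of maps `φ_c : G(c) → H(c)` which is natural from the contravariant functor `G` to the covariant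
functor `H`: for every `f : c' ⟶ c`, `H(f) ∘ φ_{c'} ∘ G(f) = φ_c`. -/
structure ITObj (G : Cᵒᵖ ⥤ Type) where
  H : C ⥤ Type
  φ : ∀ c : C, G.obj (op c) → H.obj c
  nat : ∀ {c' c : C} (f : c' ⟶ c) (x : G.obj (op c)),
    H.map f (φ c' (G.map f.op x)) = φ c x

/-- A morphism of `IT_G`: a natural transformation `n : H ⟶ H'` with `n ∘ φ = φ'`. -/
@[ext]
structure ITHom {G : Cᵒᵖ ⥤ Type} (X Y : ITObj G) where
  n : X.H ⟶ Y.H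
  comm : ∀ (c : C) (x : G.obj (op c)), n.app c (X.φ c x) = Y.φ c x

/-- The category `IT_G`. -/
instance (G : Cᵒᵖ ⥤ Type) : Category (ITObj G) where
  Hom := ITHom
  id X := ⟨𝟙 X.H, fun c x => rfl⟩
  comp f g := ⟨f.n ≫ g.n, fun c x => by
    simp only [NatTrans.comp_app, types_comp_apply, f.comm, g.comm]⟩
  id_comp f := by apply ITHom.ext; simp
  comp_id f := by apply ITHom.ext; simp
  assoc f g h := by apply ITHom.ext; simp


namespace Statement6Aux

open WalkingParallelPair WalkingParallelPairHom

variable (G : WalkingParallelPairᵒᵖ ⥤ Type)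

/-- Relation identifying `inl (G(left) x)` with `inr (G(right) x)`. -/
def R (a b : G.obj (op zero) ⊕ G.obj (op zero)) : Prop :=
  ∃ x : G.obj (op one), a = Sum.inl (G.map (Quiver.Hom.op left) x) ∧ b = Sum.inr (G.map (Quiver.Hom.op right) x)

/-- The vertex set at `one` of the initial object. -/
def T : Type := Quot (R G)

/-- The free functor. -/
def Hfree : WalkingParallelPair ⥤ Type :=
  parallelPair (X := G.obj (op zero)) (Y := T G)
    (TypeCat.ofHom fun a => Quot.mk _ (Sum.inl a)) (TypeCat.ofHom fun a => Quot.mk _ (Sum.inr a))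

/-- The initial object of `IT_G`. -/
def init : ITObj G where
  H := Hfree G
  φ c := match c with
    | zero => id
    | one => fun x => Quot.mk _ (Sum.inl (G.map (Quiver.Hom.op left) x))
  nat {c' c} f x := by
    change WalkingParallelPairHom c' c at f
    cases f with
    | id => cases c' <;> simp [Hfree] <;> rfl
    | left => rfl
    | right => exact (Quot.sound ⟨x, rfl, rfl⟩).symm

/-- The unique morphism out of `init`. -/
def toAny (Y : ITObj G) : init G ⟶ Y where
  n :=
    { app := fun c => match c with
        | zero => TypeCat.ofHom (Y.φ zero)
        | one => TypeCat.ofHom <| Quot.lift (r := R G)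
            (Sum.elim (fun a => Y.H.map left (Y.φ zero a))
                      (fun a => Y.H.map right (Y.φ zero a)))
            (by
              rintro a b ⟨x, rfl, rfl⟩
              simp only [Sum.elim_inl, Sum.elim_inr]
              exact (Y.nat left x).trans (Y.nat right x).symm)
      naturality := by
        intro c c' f
        change WalkingParallelPairHom c c' at f
        cases f with
        | id => cases c <;> simp [init, Hfree]
        | left => rfl
        | right => rfl }
  comm c x := by
    cases c with
    | zero => rfl
    | one => exact Y.nat left x

lemma uniq (Y : ITObj G) (m : init G ⟶ Y) : m = toAny G Y := by
  apply ITHom.ext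
  apply NatTrans.ext
  funext c
  ext a
  cases c with
  | zero => exact m.comm zero a
  | one =>
    induction a using Quot.ind with
    | _ a =>
      cases a with
      | inl a =>
        have := congrArg (fun g => g a) (m.n.naturality left)
        simp only [types_comp_apply] at this
        exact this.trans (congrArg (fun y => Y.H.map left y) (m.comm zero a))
      | inr a =>
        have := congrArg (fun g => g a) (m.n.naturality right)
        simp only [types_comp_apply] at this
        exact this.trans (congrArg (fun y => Y.H.map right y) (m.comm zero a))

end Statement6Aux

/-- For any directed graph `G` (a presheaf on the walking parallel pair `↑↑`),
the category `IT_G` has an initial object. -/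
theorem statement6 (G : WalkingParallelPairᵒᵖ ⥤ Type) :
    HasInitial (ITObj G) := by
  have : ∀ Y : ITObj G, Unique (Statement6Aux.init G ⟶ Y) := fun Y =>
    { default := Statement6Aux.toAny G Y
      uniq := Statement6Aux.uniq G Y }
  exact hasInitial_of_unique (Statement6Aux.init G)
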